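/- Let 2 ≤ q < ∞, α ∈ M_n(ℂ), and for i = 1, …, n let ε_{ii} be the matrix unit with 1 in position (i,i) and 0 elsewhere. Then Σ_{i=1}^n ‖α ε_{ii}‖_q^q ≤ ‖α‖_q^q, where ‖·‖_q denotes the Schatten q-norm. -/

import Mathlib

open Matrix Kronecker ComplexOrder

/-- Schatten `p`-norm of a complex `k × k` matrix: `(∑ sᵢ^p)^(1/p)` where `sᵢ` are the
singular values (square roots of the eigenvalues of `aᴴ * a`). -/
noncomputable def sNorm (p : ℝ) {k : ℕ} (a : Matrix (Fin k) (Fin k) ℂ) : ℝ :=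
  (∑ i, Real.sqrt ((Matrix.posSemidef_conjTranspose_mul_self a).1.eigenvalues i) ^ p) ^ (1 / p)

/-- Sum of eigenvalues of a Hermitian complex matrix is the real part of its trace. -/
lemma sum_eig_eq_retrace {k : ℕ} {B : Matrix (Fin k) (Fin k) ℂ} (hB : B.IsHermitian) :
    ∑ i, hB.eigenvalues i = B.trace.re := by
  conv_rhs => rw [hB.spectral_theorem, Unitary.conjStarAlgAut_apply]
  rw [Matrix.trace_mul_comm, ← Matrix.mul_assoc,
    (Unitary.mem_iff.mp (hB.eigenvectorUnitary).2).1, Matrix.one_mul, Matrix.trace_diagonal]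
  simp

/-- `sNorm q a ^ q` equals the sum of the `q/2`-th powers of the eigenvalues of `aᴴ * a`. -/
lemma sNorm_rpow {k : ℕ} {q : ℝ} (hq : 2 ≤ q) (a : Matrix (Fin k) (Fin k) ℂ) :
    sNorm q a ^ q
      = ∑ i, ((Matrix.posSemidef_conjTranspose_mul_self a).1.eigenvalues i) ^ (q / 2) := by
  have hq0 : q ≠ 0 := by linarith
  have hnn := (Matrix.posSemidef_conjTranspose_mul_self a).eigenvalues_nonneg
  have h1 : ∀ i, Real.sqrt ((Matrix.posSemidef_conjTranspose_mul_self a).1.eigenvalues i) ^ q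
      = ((Matrix.posSemidef_conjTranspose_mul_self a).1.eigenvalues i) ^ (q / 2) := by
    intro i
    rw [Real.sqrt_eq_rpow, ← Real.rpow_mul (hnn i)]
    ring_nf
  have hsum : 0 ≤ ∑ i,
      Real.sqrt ((Matrix.posSemidef_conjTranspose_mul_self a).1.eigenvalues i) ^ q :=
    Finset.sum_nonneg fun i _ => Real.rpow_nonneg (Real.sqrt_nonneg _) _
  rw [sNorm, ← Real.rpow_mul hsum, one_div_mul_cancel hq0, Real.rpow_one]
  exact Finset.sum_congr rfl fun i _ => h1 i

/-- Diagonal entry of a Hermitian matrix as a convex combination of eigenvalues. -/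
lemma diag_re_eq_sum {n : ℕ} {A : Matrix (Fin n) (Fin n) ℂ} (hA : A.IsHermitian) (i : Fin n) :
    (A i i).re = ∑ j, Complex.normSq ((hA.eigenvectorUnitary : Matrix (Fin n) (Fin n) ℂ) i j)
      * hA.eigenvalues j := by
  set U := (hA.eigenvectorUnitary : Matrix (Fin n) (Fin n) ℂ)
  conv_lhs => rw [hA.spectral_theorem, Unitary.conjStarAlgAut_apply]
  rw [Matrix.mul_apply]
  simp only [Matrix.mul_apply, Matrix.diagonal_apply, Matrix.conjTranspose_apply]
  rw [Complex.re_sum]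
  refine Finset.sum_congr rfl fun j _ => ?_
  simp [Finset.sum_ite_eq, Function.comp]
  simp [Complex.normSq_apply, Complex.mul_re, Complex.mul_im,
    Matrix.IsHermitian.eigenvectorUnitary_apply, U]
  ring

lemma row_sum_one {n : ℕ} {A : Matrix (Fin n) (Fin n) ℂ} (hA : A.IsHermitian) (i : Fin n) :
    ∑ j, Complex.normSq ((hA.eigenvectorUnitary : Matrix (Fin n) (Fin n) ℂ) i j) = 1 := by
  set U := (hA.eigenvectorUnitary : Matrix (Fin n) (Fin n) ℂ)
  have h : (U * star U) i i = 1 := by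
    rw [(Unitary.mem_iff.mp (hA.eigenvectorUnitary).2).2]; simp
  rw [Matrix.mul_apply] at h
  have := congrArg Complex.re h
  rw [Complex.re_sum] at this
  simpa [Matrix.conjTranspose_apply, Complex.mul_conj] using this

lemma col_sum_one {n : ℕ} {A : Matrix (Fin n) (Fin n) ℂ} (hA : A.IsHermitian) (j : Fin n) :
    ∑ i, Complex.normSq ((hA.eigenvectorUnitary : Matrix (Fin n) (Fin n) ℂ) i j) = 1 := by
  set U := (hA.eigenvectorUnitary : Matrix (Fin n) (Fin n) ℂ)
  have h : (star U * U) j j = 1 := by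
    rw [(Unitary.mem_iff.mp (hA.eigenvectorUnitary).2).1]; simp
  rw [Matrix.mul_apply] at h
  have := congrArg Complex.re h
  rw [Complex.re_sum] at this
  simpa [Matrix.conjTranspose_apply, mul_comm, Complex.mul_conj] using this

lemma trace_col {n : ℕ} (α : Matrix (Fin n) (Fin n) ℂ) (i : Fin n) :
    ((α * Matrix.single i i 1)ᴴ * (α * Matrix.single i i 1)).trace
      = (αᴴ * α) i i := by
  simp [Matrix.trace, Matrix.diag, Matrix.mul_apply, Matrix.conjTranspose_apply,
    Matrix.single, Finset.sum_ite_eq, ite_and]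

/-- Let `2 ≤ q < ∞`, `α ∈ M_n(ℂ)`, and `ε_{ii}` the matrix unit with `1` in position `(i,i)`.
Then `∑_{i=1}^n ‖α ε_{ii}‖_q^q ≤ ‖α‖_q^q`, where `‖·‖_q` is the Schatten `q`-norm. -/
theorem stmt_8 {n : ℕ} (q : ℝ) (hq : 2 ≤ q) (α : Matrix (Fin n) (Fin n) ℂ) :
    ∑ i : Fin n, sNorm q (α * Matrix.single i i 1) ^ q ≤ sNorm q α ^ q := by
  set A := αᴴ * α with hAdef
  have hA : A.PosSemidef := Matrix.posSemidef_conjTranspose_mul_self α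
  set p := q / 2 with hpdef
  have hp1 : 1 ≤ p := by rw [hpdef]; linarith
  have hp0 : p ≠ 0 := by positivity
  set lam := hA.1.eigenvalues with hlam
  have hlamnn : ∀ j, 0 ≤ lam j := hA.eigenvalues_nonneg
  set c : Fin n → ℝ := fun i => (A i i).re with hcdef
  have hcnn : ∀ i, 0 ≤ c i := by
    intro i
    have : c i = (A i i).re := rfl
    rw [this, diag_re_eq_sum hA.1 i]
    exact Finset.sum_nonneg fun j _ =>
      mul_nonneg (Complex.normSq_nonneg _) (hlamnn j)
  -- Step 1: each term is at most `c i ^ p`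
  have step1 : ∀ i : Fin n, sNorm q (α * Matrix.single i i 1) ^ q ≤ c i ^ p := by
    intro i
    rw [sNorm_rpow hq]
    set hB := Matrix.posSemidef_conjTranspose_mul_self (α * Matrix.single i i 1)
    have hμnn : ∀ j, 0 ≤ hB.1.eigenvalues j := hB.eigenvalues_nonneg
    have hμsum : ∑ j, hB.1.eigenvalues j = c i := by
      rw [sum_eig_eq_retrace hB.1, trace_col α i]
    have hμle : ∀ j, hB.1.eigenvalues j ≤ c i := by
      intro j
      rw [← hμsum]
      exact Finset.single_le_sum (fun j _ => hμnn j) (Finset.mem_univ j)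
    calc ∑ j, hB.1.eigenvalues j ^ p
        ≤ ∑ j, c i ^ (p - 1) * hB.1.eigenvalues j := by
          refine Finset.sum_le_sum fun j _ => ?_
          have h1 : hB.1.eigenvalues j ^ p
              = hB.1.eigenvalues j ^ (p - 1) * hB.1.eigenvalues j := by
            rw [← Real.rpow_add_one' (hμnn j) (by rw [sub_add_cancel]; exact hp0),
              sub_add_cancel]
          rw [h1]
          exact mul_le_mul_of_nonneg_right
            (Real.rpow_le_rpow (hμnn j) (hμle j) (by linarith)) (hμnn j)
      _ = c i ^ (p - 1) * c i := by rw [← Finset.mul_sum, hμsum]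
      _ = c i ^ p := by
          rw [← Real.rpow_add_one' (hcnn i) (by rw [sub_add_cancel]; exact hp0),
            sub_add_cancel]
  -- Step 2: ∑ c i ^ p ≤ ∑ lam j ^ p
  set U := (hA.1.eigenvectorUnitary : Matrix (Fin n) (Fin n) ℂ) with hU
  have step2 : ∑ i, c i ^ p ≤ ∑ j, lam j ^ p := by
    have jensen : ∀ i, c i ^ p ≤ ∑ j, Complex.normSq (U i j) * lam j ^ p := by
      intro i
      have : c i = (A i i).re := rfl
      rw [this, diag_re_eq_sum hA.1 i]
      exact Real.rpow_arith_mean_le_arith_mean_rpow Finset.univ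
        (fun j => Complex.normSq (U i j)) lam
        (fun j _ => Complex.normSq_nonneg _) (row_sum_one hA.1 i)
        (fun j _ => hlamnn j) hp1
    calc ∑ i, c i ^ p ≤ ∑ i, ∑ j, Complex.normSq (U i j) * lam j ^ p :=
          Finset.sum_le_sum fun i _ => jensen i
      _ = ∑ j, (∑ i, Complex.normSq (U i j)) * lam j ^ p := by
          rw [Finset.sum_comm]
          exact Finset.sum_congr rfl fun j _ => (Finset.sum_mul _ _ _).symm
      _ = ∑ j, lam j ^ p := by
          exact Finset.sum_congr rfl fun j _ => by rw [col_sum_one hA.1 j, one_mul]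
  calc ∑ i : Fin n, sNorm q (α * Matrix.single i i 1) ^ q
      ≤ ∑ i, c i ^ p := Finset.sum_le_sum fun i _ => step1 i
    _ ≤ ∑ j, lam j ^ p := step2
    _ = sNorm q α ^ q := (sNorm_rpow hq α).symm
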